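/- arXiv:1905.10807 — 6 statements merged into one kernel-verified Lean document; each statement's English description precedes it below -/
import Mathlib

section
/- For all integers n ≥ k ≥ t ≥ 1 with n > k, the packing number satisfies D(n,k,t) ≤ ⌊(n/k)·D(n−1,k−1,t−1)⌋, where D(n,k,t) is the maximum number of k-subsets of an n-set such that every t-subset is contained in at most one of them. -/
/-- The packing number D(n,k,t): the maximum number of k-subsets of an n-set
such that every t-subset is contained in at most one of them. -/
noncomputable def packingNumber (n k t : ℕ) : ℕ :=
  sSup {m | ∃ B : Finset (Finset (Fin n)),
    (∀ b ∈ B, b.card = k) ∧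
    (∀ T : Finset (Fin n), T.card = t → (B.filter (fun b => T ⊆ b)).card ≤ 1) ∧
    B.card = m}

lemma packing_bddAbove (n k t : ℕ) : ∀ m ∈ {m | ∃ B : Finset (Finset (Fin n)),
    (∀ b ∈ B, b.card = k) ∧
    (∀ T : Finset (Fin n), T.card = t → (B.filter (fun b => T ⊆ b)).card ≤ 1) ∧
    B.card = m}, m ≤ Fintype.card (Finset (Fin n)) := by
  rintro m ⟨B, -, -, rfl⟩
  exact Finset.card_le_univ B

theorem stmt0 (n k t : ℕ) (ht : 1 ≤ t) (htk : t ≤ k) (hkn : k < n) :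
    packingNumber n k t ≤ n * packingNumber (n - 1) (k - 1) (t - 1) / k := by
  obtain ⟨s, rfl⟩ : ∃ s, t = s + 1 := ⟨t - 1, (Nat.succ_pred_eq_of_pos ht).symm⟩
  obtain ⟨j, rfl⟩ : ∃ j, k = j + 1 := ⟨k - 1, (Nat.succ_pred_eq_of_pos (ht.trans htk)).symm⟩
  obtain ⟨m, rfl⟩ : ∃ m, n = m + 1 :=
    ⟨n - 1, (Nat.succ_pred_eq_of_pos (Nat.zero_lt_of_lt hkn)).symm⟩
  simp only [Nat.add_sub_cancel]
  set D := packingNumber m j s with hD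
  apply csSup_le'
  rintro M ⟨B, hcard, hpack, rfl⟩
  rw [Nat.le_div_iff_mul_le (Nat.succ_pos j)]
  -- key: for each x, number of blocks containing x is ≤ D
  have key : ∀ x : Fin (m + 1), (B.filter (fun b => x ∈ b)).card ≤ D := by
    intro x
    set e : Fin m ↪ Fin (m + 1) := ⟨x.succAbove, x.succAbove_right_injective⟩ with he
    have hinj : Function.Injective (fun y : Fin m => x.succAbove y) :=
      x.succAbove_right_injective
    set F : Finset (Fin (m + 1)) → Finset (Fin m) :=
      fun b => b.preimage x.succAbove hinj.injOn with hF
    have hmap : ∀ b : Finset (Fin (m + 1)), (F b).map e = b.erase x := by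
      intro b
      ext y
      simp only [Finset.mem_map, Finset.mem_preimage, Finset.mem_erase, hF, he,
        Function.Embedding.coeFn_mk]
      constructor
      · rintro ⟨i, hib, rfl⟩
        exact ⟨x.succAbove_ne i, hib⟩
      · rintro ⟨hne, hyb⟩
        obtain ⟨i, hi⟩ := Fin.exists_succAbove_eq hne
        refine ⟨i, ?_, hi⟩
        rw [hi]
        exact hyb
    have hrec : ∀ b : Finset (Fin (m + 1)), x ∈ b → insert x ((F b).map e) = b := by
      intro b hxb
      rw [hmap]
      exact Finset.insert_erase hxb
    set S := B.filter (fun b => x ∈ b) with hS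
    have hinjS : Set.InjOn F S := by
      intro b1 h1 b2 h2 hFeq
      have hx1 : x ∈ b1 := (Finset.mem_filter.mp h1).2
      have hx2 : x ∈ b2 := (Finset.mem_filter.mp h2).2
      rw [← hrec b1 hx1, ← hrec b2 hx2, hFeq]
    have hmem : S.card ∈ {M | ∃ B' : Finset (Finset (Fin m)),
        (∀ b ∈ B', b.card = j) ∧
        (∀ T : Finset (Fin m), T.card = s → (B'.filter (fun b => T ⊆ b)).card ≤ 1) ∧
        B'.card = M} := by
      refine ⟨S.image F, ?_, ?_, Finset.card_image_of_injOn hinjS⟩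
      · rintro c hc
        obtain ⟨b, hb, rfl⟩ := Finset.mem_image.mp hc
        have hxb : x ∈ b := (Finset.mem_filter.mp hb).2
        have hbB : b ∈ B := (Finset.mem_filter.mp hb).1
        have : (F b).card = (b.erase x).card := by
          rw [← hmap b, Finset.card_map]
        rw [this, Finset.card_erase_of_mem hxb, hcard b hbB, Nat.add_sub_cancel]
      · intro T' hT'
        set T : Finset (Fin (m + 1)) := insert x (T'.map e) with hT
        have hxT : x ∉ T'.map e := by
          simp only [Finset.mem_map, he, Function.Embedding.coeFn_mk]
          rintro ⟨i, -, hsq⟩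
          exact x.succAbove_ne i hsq
        have hTcard : T.card = s + 1 := by
          rw [hT, Finset.card_insert_of_notMem hxT, Finset.card_map, hT']
        have hsub : ((S.image F).filter (fun c => T' ⊆ c)) ⊆
            (B.filter (fun b => T ⊆ b)).image F := by
          intro c hc
          obtain ⟨hcim, hTc⟩ := Finset.mem_filter.mp hc
          obtain ⟨b, hb, rfl⟩ := Finset.mem_image.mp hcim
          have hxb : x ∈ b := (Finset.mem_filter.mp hb).2
          have hbB : b ∈ B := (Finset.mem_filter.mp hb).1
          refine Finset.mem_image.mpr ⟨b, Finset.mem_filter.mpr ⟨hbB, ?_⟩, rfl⟩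
          rw [hT]
          refine Finset.insert_subset hxb ?_
          calc T'.map e ⊆ (F b).map e := Finset.map_subset_map.mpr hTc
            _ = b.erase x := hmap b
            _ ⊆ b := Finset.erase_subset x b
        calc ((S.image F).filter (fun c => T' ⊆ c)).card
            ≤ ((B.filter (fun b => T ⊆ b)).image F).card := Finset.card_le_card hsub
          _ ≤ (B.filter (fun b => T ⊆ b)).card := Finset.card_image_le
          _ ≤ 1 := hpack T hTcard
    exact le_csSup ⟨_, packing_bddAbove m j s⟩ hmem
  -- double counting
  have h1 : ∑ x : Fin (m + 1), (B.filter (fun b => x ∈ b)).card = B.card * (j + 1) := by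
    simp_rw [Finset.card_filter]
    rw [Finset.sum_comm]
    have hinner : ∀ b ∈ B, (∑ x : Fin (m + 1), if x ∈ b then 1 else 0) = j + 1 := by
      intro b hb
      rw [← Finset.card_filter, Finset.filter_univ_mem, hcard b hb]
    rw [Finset.sum_congr rfl hinner, Finset.sum_const, smul_eq_mul]
  calc B.card * (j + 1) = ∑ x : Fin (m + 1), (B.filter (fun b => x ∈ b)).card := h1.symm
    _ ≤ ∑ _x : Fin (m + 1), D := Finset.sum_le_sum (fun x _ => key x)
    _ = (m + 1) * D := by rw [Finset.sum_const, Finset.card_univ, Fintype.card_fin, smul_eq_mul]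
end

section
/- For all integers n ≥ k ≥ t ≥ 1 with n > k, the packing number satisfies D(n,k,t) ≤ ⌊(n/(n−k))·D(n−1,k,t)⌋. -/
lemma packing_bdd (n k t : ℕ) : BddAbove {m | ∃ B : Finset (Finset (Fin n)),
    (∀ b ∈ B, b.card = k) ∧
    (∀ T : Finset (Fin n), T.card = t → (B.filter (fun b => T ⊆ b)).card ≤ 1) ∧
    B.card = m} := by
  refine ⟨Fintype.card (Finset (Fin n)), ?_⟩
  rintro m ⟨B, _, _, rfl⟩
  exact B.card_le_univ

lemma packing_le (n k t : ℕ) (B : Finset (Finset (Fin n)))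
    (h1 : ∀ b ∈ B, b.card = k)
    (h2 : ∀ T : Finset (Fin n), T.card = t → (B.filter (fun b => T ⊆ b)).card ≤ 1) :
    B.card ≤ packingNumber n k t :=
  le_csSup (packing_bdd n k t) ⟨B, h1, h2, rfl⟩

theorem stmt1 (n k t : ℕ) (ht : 1 ≤ t) (htk : t ≤ k) (hkn : k < n) :
    packingNumber n k t ≤ n * packingNumber (n - 1) k t / (n - k) := by
  obtain ⟨m, rfl⟩ : ∃ m, n = m + 1 := ⟨n - 1, by omega⟩
  have hnk : 0 < m + 1 - k := by omega
  rw [Nat.le_div_iff_mul_le hnk]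
  simp only [Nat.add_sub_cancel]
  -- obtain an optimal packing B
  have hne : {m' | ∃ B : Finset (Finset (Fin (m + 1))),
      (∀ b ∈ B, b.card = k) ∧
      (∀ T : Finset (Fin (m + 1)), T.card = t →
        (B.filter (fun b => T ⊆ b)).card ≤ 1) ∧
      B.card = m'}.Nonempty := ⟨0, ∅, by simp⟩
  obtain ⟨B, h1, h2, hcard⟩ := Nat.sSup_mem hne (packing_bdd (m + 1) k t)
  rw [show sSup {m' | ∃ B : Finset (Finset (Fin (m + 1))),
      (∀ b ∈ B, b.card = k) ∧
      (∀ T : Finset (Fin (m + 1)), T.card = t →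
        (B.filter (fun b => T ⊆ b)).card ≤ 1) ∧
      B.card = m'} = packingNumber (m + 1) k t from rfl] at hcard
  -- the key pointwise bound
  have key : ∀ x : Fin (m + 1),
      (B.filter (fun b => x ∉ b)).card ≤ packingNumber m k t := by
    intro x
    set B' := B.filter (fun b => x ∉ b) with hB'
    have hinj : Function.Injective x.succAbove := Fin.succAbove_right_injective
    have hrange : ∀ b ∈ B', ∀ y ∈ b, y ∈ Set.range x.succAbove := by
      intro b hb y hy
      rw [Fin.range_succAbove]
      simp only [Finset.mem_filter, hB'] at hb
      intro h
      exact hb.2 (h ▸ hy)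
    classical
    set C := B'.image (fun b => b.preimage x.succAbove hinj.injOn) with hC
    have hmapeq : ∀ b ∈ B',
        (b.preimage x.succAbove hinj.injOn).image x.succAbove = b := by
      intro b hb
      rw [Finset.image_preimage]
      exact Finset.filter_true_of_mem (fun y hy => hrange b hb y hy)
    have hCcard : C.card = B'.card := by
      rw [hC]
      apply Finset.card_image_of_injOn
      intro b1 hb1 b2 hb2 heq
      have := congrArg (Finset.image x.succAbove) heq
      rwa [hmapeq b1 hb1, hmapeq b2 hb2] at this
    have hC1 : ∀ c ∈ C, c.card = k := by
      intro c hc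
      rw [hC, Finset.mem_image] at hc
      obtain ⟨b, hb, rfl⟩ := hc
      have : ((b.preimage x.succAbove hinj.injOn).image x.succAbove).card
          = (b.preimage x.succAbove hinj.injOn).card :=
        Finset.card_image_of_injective _ hinj
      rw [hmapeq b hb] at this
      rw [← this]
      exact h1 b (Finset.mem_of_mem_filter b hb)
    have hC2 : ∀ T : Finset (Fin m), T.card = t →
        (C.filter (fun c => T ⊆ c)).card ≤ 1 := by
      intro T hT
      rw [Finset.card_le_one]
      intro c1 hc1 c2 hc2
      simp only [Finset.mem_filter] at hc1 hc2
      obtain ⟨hc1C, hTc1⟩ := hc1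
      obtain ⟨hc2C, hTc2⟩ := hc2
      rw [hC, Finset.mem_image] at hc1C hc2C
      obtain ⟨b1, hb1, rfl⟩ := hc1C
      obtain ⟨b2, hb2, rfl⟩ := hc2C
      -- the images of T in Fin (m+1)
      have hTcard : (T.image x.succAbove).card = t := by
        rw [Finset.card_image_of_injective _ hinj, hT]
      have hsub1 : T.image x.succAbove ⊆ b1 := by
        rw [← hmapeq b1 hb1]
        exact Finset.image_subset_image hTc1
      have hsub2 : T.image x.succAbove ⊆ b2 := by
        rw [← hmapeq b2 hb2]
        exact Finset.image_subset_image hTc2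
      have hb1B : b1 ∈ B := Finset.mem_of_mem_filter b1 hb1
      have hb2B : b2 ∈ B := Finset.mem_of_mem_filter b2 hb2
      have hle := h2 (T.image x.succAbove) hTcard
      rw [Finset.card_le_one] at hle
      have : b1 = b2 := hle b1 (Finset.mem_filter.mpr ⟨hb1B, hsub1⟩)
        b2 (Finset.mem_filter.mpr ⟨hb2B, hsub2⟩)
      subst this
      rfl
    calc B'.card = C.card := hCcard.symm
      _ ≤ packingNumber m k t := packing_le m k t C hC1 hC2
  -- double counting
  have count : packingNumber (m + 1) k t * (m + 1 - k)
      = ∑ x : Fin (m + 1), (B.filter (fun b => x ∉ b)).card := by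
    rw [← hcard]
    calc B.card * (m + 1 - k) = ∑ _b ∈ B, (m + 1 - k) := by
          rw [Finset.sum_const, smul_eq_mul, mul_comm]
      _ = ∑ b ∈ B, (Finset.univ.filter (fun x : Fin (m + 1) => x ∉ b)).card := by
          refine Finset.sum_congr rfl fun b hb => ?_
          have : Finset.univ.filter (fun x : Fin (m + 1) => x ∉ b) = bᶜ := by
            ext y; simp
          rw [this, Finset.card_compl, h1 b hb]
          simp
      _ = ∑ b ∈ B, ∑ x : Fin (m + 1), (if x ∉ b then 1 else 0) := by
          simp [Finset.card_filter]
      _ = ∑ x : Fin (m + 1), ∑ b ∈ B, (if x ∉ b then 1 else 0) := Finset.sum_comm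
      _ = ∑ x : Fin (m + 1), (B.filter (fun b => x ∉ b)).card := by
          simp [Finset.card_filter]
  calc packingNumber (m + 1) k t * (m + 1 - k)
      = ∑ x : Fin (m + 1), (B.filter (fun b => x ∉ b)).card := count
    _ ≤ ∑ _x : Fin (m + 1), packingNumber m k t :=
        Finset.sum_le_sum fun x _ => key x
    _ = (m + 1) * packingNumber m k t := by
        rw [Finset.sum_const, smul_eq_mul]; simp
end

section
/- Let n, k be positive integers with n > k ≥ 4, (n−2) ≡ 0 (mod k−2) and (n−1)(n−2) ≢ 0 (mod (k−1)(k−2)). Then D(n,k,3) ≤ J'(n,k,3), where J'(n,k,3) = ⌊(n/k)·(⌊(n−1)(n−2)/((k−1)(k−2))⌋ − 1)⌋. -/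
open Finset

lemma star_bound (n k : ℕ) (hk : 4 ≤ k) (hkn : k < n)
    (h1 : (k - 2) ∣ (n - 2)) (h2 : ¬ ((k - 1) * (k - 2) ∣ (n - 1) * (n - 2)))
    (x : Fin n) (C : Finset (Finset (Fin n)))
    (hCk : ∀ b ∈ C, b.card = k) (hCx : ∀ b ∈ C, x ∈ b)
    (hCpair : ∀ y z : Fin n, y ≠ x → z ≠ x → y ≠ z →
      ∀ b ∈ C, ∀ c ∈ C, y ∈ b → z ∈ b → y ∈ c → z ∈ c → b = c) :
    C.card ≤ (n - 1) * (n - 2) / ((k - 1) * (k - 2)) - 1 := by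
  by_contra hcon
  set r : ℕ := (n - 2) / (k - 2) with hr_def
  set J : ℕ := (n - 1) * (n - 2) / ((k - 1) * (k - 2)) with hJ_def
  set s : ℕ := ((n - 1) * r) % (k - 1) with hs_def
  have hn5 : 5 ≤ n := by omega
  have hr : r * (k - 2) = n - 2 := Nat.div_mul_cancel h1
  have hrpos : 1 ≤ r := by
    rcases Nat.eq_zero_or_pos r with h | h
    · rw [h] at hr; omega
    · exact h
  -- degree and covered set
  set deg : Fin n → ℕ := fun y => (C.filter (fun b => y ∈ b)).card with hdeg_def
  set cov : Fin n → Finset (Fin n) :=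
    fun y => (C.filter (fun b => y ∈ b)).biUnion (fun b => b \ {x, y}) with hcov_def
  have hcovcard : ∀ y : Fin n, y ≠ x → (cov y).card = deg y * (k - 2) := by
    intro y hy
    rw [hcov_def]
    rw [Finset.card_biUnion]
    · rw [Finset.sum_congr rfl (fun b hb => ?_), Finset.sum_const, smul_eq_mul]
      simp only [Finset.mem_filter] at hb
      have hsub : ({x, y} : Finset (Fin n)) ⊆ b := by
        intro z hz; simp only [Finset.mem_insert, Finset.mem_singleton] at hz
        rcases hz with rfl | rfl
        · exact hCx b hb.1
        · exact hb.2
      rw [Finset.card_sdiff_of_subset hsub, hCk b hb.1, Finset.card_pair (fun h => hy h.symm)]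
    · intro b hb c hc hbc
      simp only [Finset.mem_coe, Finset.mem_filter] at hb hc
      rw [Function.onFun, Finset.disjoint_left]
      intro z hzb hzc
      simp only [Finset.mem_sdiff, Finset.mem_insert, Finset.mem_singleton, not_or] at hzb hzc
      exact hbc (hCpair y z hy (fun h => hzb.2.1 h) (fun h => hzb.2.2 h.symm)
        b hb.1 c hc.1 hb.2 hzb.1 hc.2 hzc.1)
  have hcovsub : ∀ y : Fin n, cov y ⊆ Finset.univ \ {x, y} := by
    intro y z hz
    rw [hcov_def] at hz
    simp only [Finset.mem_biUnion, Finset.mem_filter, Finset.mem_sdiff] at hz ⊢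
    obtain ⟨b, _, hzb⟩ := hz
    exact ⟨Finset.mem_univ z, hzb.2⟩
  have huniv2 : ∀ y : Fin n, y ≠ x → (Finset.univ \ ({x, y} : Finset (Fin n))).card = n - 2 := by
    intro y hy
    rw [Finset.card_sdiff_of_subset (Finset.subset_univ _), Finset.card_univ, Fintype.card_fin,
      Finset.card_pair (fun h => hy h.symm)]
  have hdeg_le : ∀ y : Fin n, y ≠ x → deg y ≤ r := by
    intro y hy
    have h3 : deg y * (k - 2) ≤ r * (k - 2) := by
      rw [← hcovcard y hy, hr]
      calc (cov y).card ≤ (Finset.univ \ ({x, y} : Finset (Fin n))).card :=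
            Finset.card_le_card (hcovsub y)
        _ = n - 2 := huniv2 y hy
    exact Nat.le_of_mul_le_mul_right h3 (by omega)
  -- sum of degrees
  have hcard1 : (Finset.univ \ ({x} : Finset (Fin n))).card = n - 1 := by
    rw [Finset.card_sdiff_of_subset (Finset.subset_univ _), Finset.card_univ, Fintype.card_fin,
      Finset.card_singleton]
  have hsum : ∑ y ∈ Finset.univ \ ({x} : Finset (Fin n)), deg y = C.card * (k - 1) := by
    have : ∀ y, deg y = ∑ b ∈ C, if y ∈ b then 1 else 0 := by
      intro y; rw [hdeg_def]; exact Finset.card_filter _ _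
    calc ∑ y ∈ Finset.univ \ ({x} : Finset (Fin n)), deg y
        = ∑ y ∈ Finset.univ \ ({x} : Finset (Fin n)), ∑ b ∈ C, if y ∈ b then 1 else 0 := by
          exact Finset.sum_congr rfl (fun y _ => this y)
      _ = ∑ b ∈ C, ∑ y ∈ Finset.univ \ ({x} : Finset (Fin n)), if y ∈ b then 1 else 0 :=
          Finset.sum_comm
      _ = ∑ b ∈ C, (k - 1) := by
          refine Finset.sum_congr rfl (fun b hb => ?_)
          rw [← Finset.card_filter]
          have : (Finset.univ \ ({x} : Finset (Fin n))).filter (fun y => y ∈ b) = b \ {x} := by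
            ext z
            simp only [Finset.mem_filter, Finset.mem_sdiff, Finset.mem_univ, true_and,
              Finset.mem_singleton]
            tauto
          rw [this, Finset.card_sdiff_of_subset (by simpa using hCx b hb), hCk b hb,
            Finset.card_singleton]
      _ = C.card * (k - 1) := by rw [Finset.sum_const, smul_eq_mul]
  -- arithmetic facts
  have hJr : J = (n - 1) * r / (k - 1) := by
    rw [hJ_def]
    have : (n - 1) * (n - 2) = ((n - 1) * r) * (k - 2) := by rw [← hr]; ring
    rw [this, Nat.mul_div_mul_right _ _ (show 0 < k - 2 by omega)]
  have hsdef : (n - 1) * r = (k - 1) * J + s := by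
    rw [hJr, hs_def]; exact (Nat.div_add_mod _ _).symm
  have hs0 : s ≠ 0 := by
    intro h
    apply h2
    obtain ⟨t, ht⟩ := Nat.dvd_of_mod_eq_zero (hs_def ▸ h)
    refine ⟨t, ?_⟩
    calc (n - 1) * (n - 2) = ((n - 1) * r) * (k - 2) := by rw [← hr]; ring
      _ = ((k - 1) * t) * (k - 2) := by rw [ht]
      _ = (k - 1) * (k - 2) * t := by ring
  have hs_lt : s < k - 1 := Nat.mod_lt _ (by omega)
  have hCle : C.card * (k - 1) ≤ (n - 1) * r := by
    rw [← hsum]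
    calc ∑ y ∈ Finset.univ \ ({x} : Finset (Fin n)), deg y
        ≤ ∑ y ∈ Finset.univ \ ({x} : Finset (Fin n)), r := by
          refine Finset.sum_le_sum (fun y hy => ?_)
          simp only [Finset.mem_sdiff, Finset.mem_singleton] at hy
          exact hdeg_le y hy.2
      _ = (n - 1) * r := by rw [Finset.sum_const, smul_eq_mul, hcard1]
  have hne : C.card * (k - 1) ≠ (n - 1) * r := by
    intro h
    apply hs0
    rw [hs_def, ← h, Nat.mul_mod_left]
  have hCge : J ≤ C.card := by omega
  have hmul : (k - 1) * J ≤ (k - 1) * C.card := Nat.mul_le_mul_left _ hCge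
  have hcomm : C.card * (k - 1) = (k - 1) * C.card := Nat.mul_comm _ _
  set Dsum : ℕ := (n - 1) * r - C.card * (k - 1) with hDsum_def
  have hD1 : 1 ≤ Dsum := by omega
  have hDs : Dsum ≤ s := by omega
  have hsum_def : ∑ y ∈ Finset.univ \ ({x} : Finset (Fin n)), (r - deg y) = Dsum := by
    have h4 : ∑ y ∈ Finset.univ \ ({x} : Finset (Fin n)), (r - deg y)
        + ∑ y ∈ Finset.univ \ ({x} : Finset (Fin n)), deg y
        = ∑ y ∈ Finset.univ \ ({x} : Finset (Fin n)), r := by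
      rw [← Finset.sum_add_distrib]
      refine Finset.sum_congr rfl (fun y hy => ?_)
      simp only [Finset.mem_sdiff, Finset.mem_singleton] at hy
      have := hdeg_le y hy.2
      omega
    rw [hsum] at h4
    rw [Finset.sum_const, smul_eq_mul, hcard1] at h4
    omega
  set S : Finset (Fin n) := (Finset.univ \ ({x} : Finset (Fin n))).filter (fun y => deg y < r)
    with hS_def
  have hScard : S.card ≤ Dsum := by
    calc S.card = ∑ y ∈ S, 1 := by rw [Finset.card_eq_sum_ones]
      _ ≤ ∑ y ∈ S, (r - deg y) := by
          refine Finset.sum_le_sum (fun y hy => ?_)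
          rw [hS_def] at hy
          simp only [Finset.mem_filter] at hy
          omega
      _ ≤ ∑ y ∈ Finset.univ \ ({x} : Finset (Fin n)), (r - deg y) := by
          refine Finset.sum_le_sum_of_subset (Finset.filter_subset _ _)
      _ = Dsum := hsum_def
  have hSne : S.Nonempty := by
    rw [Finset.nonempty_iff_ne_empty]
    intro h
    have : ∑ y ∈ Finset.univ \ ({x} : Finset (Fin n)), (r - deg y) = 0 := by
      refine Finset.sum_eq_zero (fun y hy => ?_)
      simp only [Finset.mem_sdiff, Finset.mem_singleton] at hy
      by_contra hne'
      have hyS : y ∈ S := by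
        rw [hS_def]
        simp only [Finset.mem_filter, Finset.mem_sdiff, Finset.mem_univ, true_and,
          Finset.mem_singleton]
        exact ⟨hy.2, by omega⟩
      rw [h] at hyS
      exact absurd hyS (Finset.notMem_empty y)
    omega
  obtain ⟨y, hyS⟩ := hSne
  have hyS' := hyS
  rw [hS_def] at hyS'
  simp only [Finset.mem_filter, Finset.mem_sdiff, Finset.mem_univ, true_and,
    Finset.mem_singleton] at hyS'
  obtain ⟨hyx, hydeg⟩ := hyS'
  -- the leave at y
  set L : Finset (Fin n) := (Finset.univ \ ({x, y} : Finset (Fin n))) \ cov y with hL_def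
  have hLcard : L.card = (n - 2) - deg y * (k - 2) := by
    rw [hL_def, Finset.card_sdiff_of_subset (hcovsub y), huniv2 y hyx, hcovcard y hyx]
  have hLge : k - 2 ≤ L.card := by
    have h5 : deg y * (k - 2) + (k - 2) ≤ r * (k - 2) := by
      have : deg y + 1 ≤ r := hydeg
      calc deg y * (k - 2) + (k - 2) = (deg y + 1) * (k - 2) := by ring
        _ ≤ r * (k - 2) := Nat.mul_le_mul_right _ this
    rw [hr] at h5
    omega
  have hLS : L ⊆ S.erase y := by
    intro z hz
    rw [hL_def] at hz
    simp only [Finset.mem_sdiff, Finset.mem_univ, true_and, Finset.mem_insert,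
      Finset.mem_singleton, not_or] at hz
    obtain ⟨⟨hzx, hzy⟩, hzcov⟩ := hz
    rw [Finset.mem_erase]
    refine ⟨hzy, ?_⟩
    rw [hS_def]
    simp only [Finset.mem_filter, Finset.mem_sdiff, Finset.mem_univ, true_and,
      Finset.mem_singleton]
    refine ⟨hzx, ?_⟩
    by_contra hzr
    have hzr' : deg z = r := le_antisymm (hdeg_le z hzx) (by omega)
    -- cov z = univ \ {x, z}
    have hcz : cov z = Finset.univ \ ({x, z} : Finset (Fin n)) := by
      apply Finset.eq_of_subset_of_card_le (hcovsub z)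
      rw [huniv2 z hzx, hcovcard z hzx, hzr', hr]
    have hy_in : y ∈ cov z := by
      rw [hcz]
      simp only [Finset.mem_sdiff, Finset.mem_univ, true_and, Finset.mem_insert,
        Finset.mem_singleton, not_or]
      exact ⟨hyx, fun h => hzy h.symm⟩
    rw [hcov_def] at hy_in
    simp only [Finset.mem_biUnion, Finset.mem_filter, Finset.mem_sdiff, Finset.mem_insert,
      Finset.mem_singleton, not_or] at hy_in
    obtain ⟨b, ⟨hbC, hzb⟩, hyb, _, _⟩ := hy_in
    apply hzcov
    rw [hcov_def]
    simp only [Finset.mem_biUnion, Finset.mem_filter, Finset.mem_sdiff, Finset.mem_insert,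
      Finset.mem_singleton, not_or]
    exact ⟨b, ⟨hbC, hyb⟩, hzb, hzx, hzy⟩
  have hfinal : L.card ≤ S.card - 1 := by
    calc L.card ≤ (S.erase y).card := Finset.card_le_card hLS
      _ = S.card - 1 := Finset.card_erase_of_mem hyS
  omega

theorem stmt4 (n k : ℕ) (hk : 4 ≤ k) (hkn : k < n)
    (h1 : (k - 2) ∣ (n - 2))
    (h2 : ¬ ((k - 1) * (k - 2) ∣ (n - 1) * (n - 2))) :
    packingNumber n k 3 ≤ n * ((n - 1) * (n - 2) / ((k - 1) * (k - 2)) - 1) / k := by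
  unfold packingNumber
  apply csSup_le'
  rintro m ⟨B, hBk, hBp, rfl⟩
  set J : ℕ := (n - 1) * (n - 2) / ((k - 1) * (k - 2)) with hJ_def
  have hstar : ∀ x : Fin n, (B.filter (fun b => x ∈ b)).card ≤ J - 1 := by
    intro x
    apply star_bound n k hk hkn h1 h2 x
    · intro b hb; exact hBk b (Finset.mem_filter.mp hb).1
    · intro b hb; exact (Finset.mem_filter.mp hb).2
    · intro y z hyx hzx hyz b hb c hc hyb hzb hyc hzc
      simp only [Finset.mem_filter] at hb hc
      have hT : ({x, y, z} : Finset (Fin n)).card = 3 := by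
        rw [Finset.card_insert_of_notMem (by simp [Ne.symm hyx, Ne.symm hzx]),
          Finset.card_insert_of_notMem (by simp [hyz]), Finset.card_singleton]
      have hmem : ∀ d ∈ B, x ∈ d → y ∈ d → z ∈ d →
          d ∈ B.filter (fun b => ({x, y, z} : Finset (Fin n)) ⊆ b) := by
        intro d hd hx hy hz
        rw [Finset.mem_filter]
        refine ⟨hd, ?_⟩
        intro w hw
        simp only [Finset.mem_insert, Finset.mem_singleton] at hw
        rcases hw with rfl | rfl | rfl <;> assumption
      exact Finset.card_le_one.mp (hBp _ hT) b (hmem b hb.1 hb.2 hyb hzb)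
        c (hmem c hc.1 hc.2 hyc hzc)
  -- double counting
  have hdc : ∑ x : Fin n, (B.filter (fun b => x ∈ b)).card = B.card * k := by
    calc ∑ x : Fin n, (B.filter (fun b => x ∈ b)).card
        = ∑ x : Fin n, ∑ b ∈ B, if x ∈ b then 1 else 0 := by
          exact Finset.sum_congr rfl (fun x _ => Finset.card_filter _ _)
      _ = ∑ b ∈ B, ∑ x : Fin n, if x ∈ b then 1 else 0 := Finset.sum_comm
      _ = ∑ b ∈ B, k := by
          refine Finset.sum_congr rfl (fun b hb => ?_)
          rw [← Finset.card_filter]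
          have : Finset.univ.filter (fun x => x ∈ b) = b := by ext z; simp
          rw [this, hBk b hb]
      _ = B.card * k := by rw [Finset.sum_const, smul_eq_mul]
  have hle : B.card * k ≤ n * (J - 1) := by
    rw [← hdc]
    calc ∑ x : Fin n, (B.filter (fun b => x ∈ b)).card
        ≤ ∑ _x : Fin n, (J - 1) := Finset.sum_le_sum (fun x _ => hstar x)
      _ = n * (J - 1) := by rw [Finset.sum_const, smul_eq_mul, Finset.card_univ, Fintype.card_fin]
  exact (Nat.le_div_iff_mul_le (by omega : 0 < k)).mpr hle
end

section
/- Suppose D(n,k,3) ≥ ξ for positive integers n > k ≥ 3 and ξ ≥ 0. Then there exists a multigraph G on n vertices such that: (i) 2|E(G)| = n(n−1)(n−2) − k(k−1)(k−2)ξ; (ii) every vertex x satisfies deg_G(x) ≡ (n−1)(n−2) (mod (k−1)(k−2)); (iii) every pair of distinct vertices x,y satisfies m_G(xy) ≡ n−2 (mod k−2); and (iv) G admits a decomposition into pairwise distinct triangles (a set of distinct 3-subsets of V(G) such that each pair {x,y} lies in exactly m_G(xy) of them). -/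
/-- A distinct K3-decomposition of a multigraph with multiplicity function m. -/
def IsTriangleDecomp {V : Type*} [DecidableEq V] (m : V → V → ℕ)
    (C : Finset (Finset V)) : Prop :=
  (∀ T ∈ C, T.card = 3) ∧
  ∀ x y : V, x ≠ y → (C.filter (fun T => x ∈ T ∧ y ∈ T)).card = m x y

-- disjointness of third-point sets
lemma aux_disj {n : ℕ} (B' : Finset (Finset (Fin n)))
    (hpack : ∀ T : Finset (Fin n), T.card = 3 → (B'.filter (fun b => T ⊆ b)).card ≤ 1)
    (x y : Fin n) (hxy : x ≠ y) :
    ∀ b1 ∈ B'.filter (fun b => x ∈ b ∧ y ∈ b), ∀ b2 ∈ B'.filter (fun b => x ∈ b ∧ y ∈ b),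
      b1 ≠ b2 → Disjoint (b1 \ {x, y}) (b2 \ {x, y}) := by
  intro b1 h1 b2 h2 hne
  simp only [Finset.mem_filter] at h1 h2
  rw [Finset.disjoint_left]
  intro z hz1 hz2
  simp only [Finset.mem_sdiff, Finset.mem_insert, Finset.mem_singleton, not_or] at hz1 hz2
  have h3 : ({x, y, z} : Finset (Fin n)).card = 3 := by
    rw [Finset.card_insert_of_notMem (by simp; exact ⟨hxy, fun h => hz1.2.1 h.symm⟩),
        Finset.card_insert_of_notMem (by simp; exact fun h => hz1.2.2 h.symm),
        Finset.card_singleton]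
  have hle := hpack _ h3
  have hb1 : b1 ∈ B'.filter (fun b => ({x,y,z} : Finset (Fin n)) ⊆ b) := by
    simp only [Finset.mem_filter, Finset.insert_subset_iff, Finset.singleton_subset_iff]
    exact ⟨h1.1, h1.2.1, h1.2.2, hz1.1⟩
  have hb2 : b2 ∈ B'.filter (fun b => ({x,y,z} : Finset (Fin n)) ⊆ b) := by
    simp only [Finset.mem_filter, Finset.insert_subset_iff, Finset.singleton_subset_iff]
    exact ⟨h2.1, h2.2.1, h2.2.2, hz2.1⟩
  exact hne (Finset.card_le_one.mp hle _ hb1 _ hb2)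

lemma aux_biUnion_card {n k : ℕ} (hk : 3 ≤ k) (B' : Finset (Finset (Fin n)))
    (hcard : ∀ b ∈ B', b.card = k)
    (hpack : ∀ T : Finset (Fin n), T.card = 3 → (B'.filter (fun b => T ⊆ b)).card ≤ 1)
    (x y : Fin n) (hxy : x ≠ y) :
    ((B'.filter (fun b => x ∈ b ∧ y ∈ b)).biUnion (fun b => b \ {x, y})).card
      = (k - 2) * (B'.filter (fun b => x ∈ b ∧ y ∈ b)).card := by
  rw [Finset.card_biUnion (aux_disj B' hpack x y hxy)]
  have hcc : ∀ b ∈ B'.filter (fun b => x ∈ b ∧ y ∈ b), (b \ {x, y}).card = k - 2 := by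
    intro b hb
    simp only [Finset.mem_filter] at hb
    rw [Finset.card_sdiff_of_subset (by
      intro z hz
      simp only [Finset.mem_insert, Finset.mem_singleton] at hz
      rcases hz with rfl | rfl
      exacts [hb.2.1, hb.2.2])]
    rw [hcard b hb.1, Finset.card_pair hxy]
  rw [Finset.sum_congr rfl hcc, Finset.sum_const, smul_eq_mul, mul_comm]

theorem stmt6 (n k ξ : ℕ) (hk : 3 ≤ k) (hkn : k < n)
    (h : ξ ≤ packingNumber n k 3) :
    ∃ m : Fin n → Fin n → ℕ,
      (∀ x y, m x y = m y x) ∧ (∀ x, m x x = 0) ∧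
      (∑ x, ∑ y, m x y) + k * (k - 1) * (k - 2) * ξ = n * (n - 1) * (n - 2) ∧
      (∀ x, (∑ y, m x y) ≡ (n - 1) * (n - 2) [MOD (k - 1) * (k - 2)]) ∧
      (∀ x y, x ≠ y → m x y ≡ n - 2 [MOD k - 2]) ∧
      ∃ C : Finset (Finset (Fin n)), IsTriangleDecomp m C := by
  classical
  rw [packingNumber] at h
  have hne : {m | ∃ B : Finset (Finset (Fin n)),
      (∀ b ∈ B, b.card = k) ∧
      (∀ T : Finset (Fin n), T.card = 3 → (B.filter (fun b => T ⊆ b)).card ≤ 1) ∧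
      B.card = m}.Nonempty := ⟨0, ∅, by simp⟩
  have hbdd : BddAbove {m | ∃ B : Finset (Finset (Fin n)),
      (∀ b ∈ B, b.card = k) ∧
      (∀ T : Finset (Fin n), T.card = 3 → (B.filter (fun b => T ⊆ b)).card ≤ 1) ∧
      B.card = m} := by
    refine ⟨2 ^ n, ?_⟩
    rintro m ⟨B, -, -, rfl⟩
    calc B.card ≤ Fintype.card (Finset (Fin n)) := Finset.card_le_univ B
    _ = 2 ^ n := by simp
  obtain ⟨B, hBk, hBpack, hBcard⟩ := Nat.sSup_mem hne hbdd
  rw [← hBcard] at h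
  obtain ⟨B', hB'B, hB'card⟩ := Finset.exists_subset_card_eq h
  have hcard : ∀ b ∈ B', b.card = k := fun b hb => hBk b (hB'B hb)
  have hpack : ∀ T : Finset (Fin n), T.card = 3 →
      (B'.filter (fun b => T ⊆ b)).card ≤ 1 := fun T hT =>
    le_trans (Finset.card_le_card (Finset.filter_subset_filter _ hB'B)) (hBpack T hT)
  set lam : Fin n → Fin n → ℕ :=
    fun x y => (B'.filter (fun b => x ∈ b ∧ y ∈ b)).card with hlam
  set m : Fin n → Fin n → ℕ :=
    fun x y => if x = y then 0 else (n - 2) - (k - 2) * lam x y with hm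
  -- the biUnion of third points
  have hU : ∀ x y : Fin n, x ≠ y →
      ((B'.filter (fun b => x ∈ b ∧ y ∈ b)).biUnion (fun b => b \ {x, y}))
        ⊆ Finset.univ \ {x, y} := by
    intro x y hxy
    intro z hz
    simp only [Finset.mem_biUnion, Finset.mem_filter, Finset.mem_sdiff] at hz ⊢
    obtain ⟨b, -, hzb⟩ := hz
    exact ⟨Finset.mem_univ z, hzb.2⟩
  have hcardcompl : ∀ x y : Fin n, x ≠ y → (Finset.univ \ {x, y} : Finset (Fin n)).card = n - 2 := by
    intro x y hxy
    rw [Finset.card_sdiff_of_subset (Finset.subset_univ _), Finset.card_univ, Fintype.card_fin,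
      Finset.card_pair hxy]
  have hbound : ∀ x y : Fin n, x ≠ y → (k - 2) * lam x y ≤ n - 2 := by
    intro x y hxy
    rw [← aux_biUnion_card hk B' hcard hpack x y hxy, ← hcardcompl x y hxy]
    exact Finset.card_le_card (hU x y hxy)
  -- helper: m is definitionally (n-2) - (k-2)*lam off-diagonal
  have hmval : ∀ x y : Fin n, x ≠ y → m x y = (n - 2) - (k - 2) * lam x y := by
    intro x y hxy; simp [hm, hxy]
  have hmle : ∀ x y : Fin n, x ≠ y → m x y ≤ n - 2 := by
    intro x y hxy; rw [hmval x y hxy]; exact Nat.sub_le _ _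
  have hmsub : ∀ x y : Fin n, x ≠ y → (n - 2) - m x y = (k - 2) * lam x y := by
    intro x y hxy; rw [hmval x y hxy, Nat.sub_sub_self (hbound x y hxy)]
  have lamsymm : ∀ x y : Fin n, lam x y = lam y x := by
    intro x y
    simp only [hlam]
    congr 1
    exact Finset.filter_congr (fun b _ => by tauto)
  -- row sums of lam
  have hrow : ∀ x : Fin n, ∑ y ∈ Finset.univ.erase x, lam x y
      = (B'.filter (fun b => x ∈ b)).card * (k - 1) := by
    intro x
    simp only [hlam, Finset.card_filter]
    rw [Finset.sum_comm, Finset.sum_mul]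
    refine Finset.sum_congr rfl (fun b hb => ?_)
    by_cases hxb : x ∈ b
    · simp only [hxb, true_and, if_true, one_mul]
      have h1 : ∑ y ∈ Finset.univ.erase x, (if y ∈ b then (1:ℕ) else 0)
          = ((Finset.univ.erase x).filter (fun y => y ∈ b)).card :=
        (Finset.card_filter _ _).symm
      rw [h1]
      have h2 : (Finset.univ.erase x).filter (fun y => y ∈ b) = b.erase x := by
        ext z; simp [Finset.mem_erase, and_comm]
      rw [h2, Finset.card_erase_of_mem hxb, hcard b hb]
    · simp [hxb]
  -- degree identity
  have hdeg : ∀ x : Fin n, (∑ y, m x y)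
      + (k - 2) * ((B'.filter (fun b => x ∈ b)).card * (k - 1)) = (n - 1) * (n - 2) := by
    intro x
    have h0 : (∑ y, m x y) = ∑ y ∈ Finset.univ.erase x, m x y :=
      (Finset.sum_erase _ (by simp [hm])).symm
    rw [h0, ← hrow x, Finset.mul_sum]
    have h1 : ∀ y ∈ Finset.univ.erase x, m x y = (n - 2) - (k - 2) * lam x y := by
      intro y hy
      exact hmval x y (Ne.symm (Finset.ne_of_mem_erase hy))
    rw [Finset.sum_congr rfl h1, ← Finset.sum_add_distrib]
    have h2 : ∀ y ∈ Finset.univ.erase x,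
        (n - 2) - (k - 2) * lam x y + (k - 2) * lam x y = n - 2 := by
      intro y hy
      exact Nat.sub_add_cancel (hbound x y (Ne.symm (Finset.ne_of_mem_erase hy)))
    rw [Finset.sum_congr rfl h2, Finset.sum_const, Finset.card_erase_of_mem (Finset.mem_univ x),
      Finset.card_univ, Fintype.card_fin, smul_eq_mul]
  -- total count of incidences
  have hrtot : (∑ x : Fin n, (B'.filter (fun b => x ∈ b)).card) = ξ * k := by
    simp only [Finset.card_filter]
    rw [Finset.sum_comm]
    have h1 : ∀ b ∈ B', (∑ x : Fin n, if x ∈ b then (1:ℕ) else 0) = k := by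
      intro b hb
      rw [← Finset.card_filter]
      have : Finset.univ.filter (fun x => x ∈ b) = b := by ext z; simp
      rw [this, hcard b hb]
    rw [Finset.sum_congr rfl h1, Finset.sum_const, smul_eq_mul, hB'card]
  have htot : (∑ x, ∑ y, m x y) + k * (k - 1) * (k - 2) * ξ = n * (n - 1) * (n - 2) := by
    have h1 : (∑ x : Fin n, ((∑ y, m x y)
        + (k - 2) * ((B'.filter (fun b => x ∈ b)).card * (k - 1)))) = n * ((n - 1) * (n - 2)) := by
      rw [Finset.sum_congr rfl (fun x _ => hdeg x), Finset.sum_const, Finset.card_univ,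
        Fintype.card_fin, smul_eq_mul]
    rw [Finset.sum_add_distrib] at h1
    have h2 : (∑ x : Fin n, (k - 2) * ((B'.filter (fun b => x ∈ b)).card * (k - 1)))
        = k * (k - 1) * (k - 2) * ξ := by
      simp only [← Finset.mul_sum, ← Finset.sum_mul]
      rw [hrtot]; ring
    rw [h2] at h1
    exact h1.trans (by ring)
  have hdegmod : ∀ x, (∑ y, m x y) ≡ (n - 1) * (n - 2) [MOD (k - 1) * (k - 2)] := by
    intro x
    have hd := hdeg x
    refine (Nat.modEq_iff_dvd' (Nat.le.intro hd)).mpr ?_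
    have h3 : (n - 1) * (n - 2) - (∑ y, m x y)
        = (k - 2) * ((B'.filter (fun b => x ∈ b)).card * (k - 1)) := by omega
    rw [h3]
    exact ⟨(B'.filter (fun b => x ∈ b)).card, by ring⟩
  have hpairmod : ∀ x y : Fin n, x ≠ y → m x y ≡ n - 2 [MOD k - 2] := by
    intro x y hxy
    refine (Nat.modEq_iff_dvd' (hmle x y hxy)).mpr ?_
    rw [hmsub x y hxy]
    exact dvd_mul_right _ _
  -- the triangle decomposition
  set C : Finset (Finset (Fin n)) :=
    (Finset.univ.powersetCard 3).filter (fun T => ¬ ∃ b ∈ B', T ⊆ b) with hC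
  have hC3 : ∀ T ∈ C, T.card = 3 := by
    intro T hT
    rw [hC, Finset.mem_filter, Finset.mem_powersetCard] at hT
    exact hT.1.2
  have hCcount : ∀ x y : Fin n, x ≠ y →
      (C.filter (fun T => x ∈ T ∧ y ∈ T)).card = m x y := by
    intro x y hxy
    rw [hmval x y hxy, ← aux_biUnion_card hk B' hcard hpack x y hxy,
      ← hcardcompl x y hxy, ← Finset.card_sdiff_of_subset (hU x y hxy)]
    symm
    apply Finset.card_bij (fun z _ => insert x (insert y ({z} : Finset (Fin n))))
    · intro z hz
      rw [Finset.mem_sdiff, Finset.mem_sdiff, Finset.mem_insert, Finset.mem_singleton] at hz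
      obtain ⟨⟨-, hzxy⟩, hzU⟩ := hz
      push_neg at hzxy
      obtain ⟨hzx, hzy⟩ := hzxy
      rw [hC, Finset.mem_filter, Finset.mem_filter, Finset.mem_powersetCard]
      refine ⟨⟨⟨Finset.subset_univ _, ?_⟩, ?_⟩, ?_, ?_⟩
      · rw [Finset.card_insert_of_notMem (by simp [hxy, Ne.symm hzx]),
          Finset.card_insert_of_notMem (by simp [Ne.symm hzy]), Finset.card_singleton]
      · rintro ⟨b, hb, hsub⟩
        simp only [Finset.insert_subset_iff, Finset.singleton_subset_iff] at hsub
        refine hzU ?_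
        rw [Finset.mem_biUnion]
        exact ⟨b, Finset.mem_filter.mpr ⟨hb, hsub.1, hsub.2.1⟩,
          Finset.mem_sdiff.mpr ⟨hsub.2.2, by simp [hzx, hzy]⟩⟩
      · exact Finset.mem_insert_self _ _
      · exact Finset.mem_insert_of_mem (Finset.mem_insert_self _ _)
    · intro z1 h1 z2 h2 heq
      rw [Finset.mem_sdiff, Finset.mem_sdiff, Finset.mem_insert, Finset.mem_singleton] at h1
      obtain ⟨⟨-, h1xy⟩, -⟩ := h1
      push_neg at h1xy
      have : z1 ∈ insert x (insert y ({z2} : Finset (Fin n))) := by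
        rw [← heq]; simp
      simp only [Finset.mem_insert, Finset.mem_singleton] at this
      rcases this with h | h | h
      · exact absurd h h1xy.1
      · exact absurd h h1xy.2
      · exact h
    · intro T hT
      rw [hC, Finset.mem_filter, Finset.mem_filter, Finset.mem_powersetCard] at hT
      obtain ⟨⟨⟨-, hT3⟩, hnb⟩, hxT, hyT⟩ := hT
      have hsub : ({x, y} : Finset (Fin n)) ⊆ T := by
        intro w hw; simp only [Finset.mem_insert, Finset.mem_singleton] at hw
        rcases hw with rfl | rfl <;> assumption
      have h1 : (T \ {x, y}).card = 1 := by
        rw [Finset.card_sdiff_of_subset hsub, hT3, Finset.card_pair hxy]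
      obtain ⟨z, hz⟩ := Finset.card_eq_one.mp h1
      have hzmem : z ∈ T \ ({x, y} : Finset (Fin n)) := hz ▸ Finset.mem_singleton_self z
      rw [Finset.mem_sdiff, Finset.mem_insert, Finset.mem_singleton] at hzmem
      obtain ⟨hzT, hzxy⟩ := hzmem
      push_neg at hzxy
      have hins : insert x (insert y ({z} : Finset (Fin n))) = T := by
        apply Finset.eq_of_subset_of_card_le
        · intro w hw
          simp only [Finset.mem_insert, Finset.mem_singleton] at hw
          rcases hw with rfl | rfl | rfl <;> assumption
        · rw [hT3, Finset.card_insert_of_notMem (by simp [hxy, Ne.symm hzxy.1]),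
            Finset.card_insert_of_notMem (by simp [Ne.symm hzxy.2]), Finset.card_singleton]
      refine ⟨z, ?_, hins⟩
      rw [Finset.mem_sdiff, Finset.mem_sdiff, Finset.mem_insert, Finset.mem_singleton]
      refine ⟨⟨Finset.mem_univ z, by tauto⟩, ?_⟩
      intro hzU
      rw [Finset.mem_biUnion] at hzU
      obtain ⟨b, hb, hzb⟩ := hzU
      rw [Finset.mem_filter] at hb
      rw [Finset.mem_sdiff] at hzb
      exact hnb ⟨b, hb.1, by
        rw [← hins]
        simp only [Finset.insert_subset_iff, Finset.singleton_subset_iff]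
        exact ⟨hb.2.1, hb.2.2, hzb.1⟩⟩
  refine ⟨m, ?_, ?_, htot, hdegmod, hpairmod, C, hC3, hCcount⟩
  · intro x y
    by_cases hxy : x = y
    · rw [hxy]
    · rw [hmval x y hxy, hmval y x (Ne.symm hxy), lamsymm]
  · intro x; simp [hm]
end

section
/- Let k ≥ 4 and n satisfy (n−2) ≡ 0 (mod k−2) and (n−1)(n−2) ≡ 0 (mod (k−1)(k−2)), and let β be the residue of n(n−1)(n−2) modulo k(k−1)(k−2) in [0, k(k−1)(k−2)). Then β is divisible by (k−1)(k−2), and moreover β is divisible by 3; in particular, if 3 divides k then writing β = q(k−1)(k−2), 3 divides q. Additionally, if k is even then n is even and q is even. -/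
theorem stmt16 (n k : ℕ) (hk : 4 ≤ k) (hkn : k < n)
    (h1 : (k - 2) ∣ (n - 2))
    (h2 : (k - 1) * (k - 2) ∣ (n - 1) * (n - 2)) :
    (k - 1) * (k - 2) ∣ (n * (n - 1) * (n - 2)) % (k * (k - 1) * (k - 2)) ∧
    3 ∣ (n * (n - 1) * (n - 2)) % (k * (k - 1) * (k - 2)) ∧
    (3 ∣ k →
      3 ∣ ((n * (n - 1) * (n - 2)) % (k * (k - 1) * (k - 2))) / ((k - 1) * (k - 2))) ∧
    (2 ∣ k → 2 ∣ n ∧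
      2 ∣ ((n * (n - 1) * (n - 2)) % (k * (k - 1) * (k - 2))) / ((k - 1) * (k - 2))) := by
  obtain ⟨m, hm⟩ := h2
  have hpos : 0 < (k - 1) * (k - 2) := by
    have : 2 ≤ k - 2 := by omega
    have : 3 ≤ k - 1 := by omega
    positivity
  -- P = (k-1)*(k-2) * (n*m)
  have hP : n * (n - 1) * (n - 2) = (k - 1) * (k - 2) * (n * m) := by
    rw [mul_assoc, hm]; ring
  have hdvdM : (k - 1) * (k - 2) ∣ k * (k - 1) * (k - 2) := ⟨k, by ring⟩
  have hmod1 : (k - 1) * (k - 2) ∣ (n * (n - 1) * (n - 2)) % (k * (k - 1) * (k - 2)) :=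
    (Nat.dvd_mod_iff hdvdM).mpr ⟨n * m, hP⟩
  have h3P : 3 ∣ n * (n - 1) * (n - 2) := by
    rcases (show 3 ∣ n ∨ 3 ∣ (n - 1) ∨ 3 ∣ (n - 2) by omega) with h | h | h
    · exact dvd_mul_of_dvd_left (dvd_mul_of_dvd_left h _) _
    · exact dvd_mul_of_dvd_left (dvd_mul_of_dvd_right h _) _
    · exact dvd_mul_of_dvd_right h _
  have h3M : 3 ∣ k * (k - 1) * (k - 2) := by
    rcases (show 3 ∣ k ∨ 3 ∣ (k - 1) ∨ 3 ∣ (k - 2) by omega) with h | h | h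
    · exact dvd_mul_of_dvd_left (dvd_mul_of_dvd_left h _) _
    · exact dvd_mul_of_dvd_left (dvd_mul_of_dvd_right h _) _
    · exact dvd_mul_of_dvd_right h _
  have hmod2 : 3 ∣ (n * (n - 1) * (n - 2)) % (k * (k - 1) * (k - 2)) :=
    (Nat.dvd_mod_iff h3M).mpr h3P
  obtain ⟨q, hq⟩ := hmod1
  have hqeq : (n * (n - 1) * (n - 2)) % (k * (k - 1) * (k - 2)) / ((k - 1) * (k - 2)) = q := by
    rw [hq, Nat.mul_div_cancel_left _ hpos]
  refine ⟨⟨q, hq⟩, hmod2, ?_, ?_⟩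
  · intro h3k
    have hp3 : Nat.Prime 3 := by norm_num
    have c1 : Nat.Coprime 3 (k - 1) := (hp3.coprime_iff_not_dvd).mpr (by omega)
    have c2 : Nat.Coprime 3 (k - 2) := (hp3.coprime_iff_not_dvd).mpr (by omega)
    have cop : Nat.Coprime 3 ((k - 1) * (k - 2)) := c1.mul_right c2
    rw [hqeq]
    exact cop.dvd_of_dvd_mul_left (by rwa [← hq])
  · intro h2k
    have h2n : 2 ∣ n := by
      have : 2 ∣ (n - 2) := dvd_trans (show (2:ℕ) ∣ (k - 2) by omega) h1
      omega
    refine ⟨h2n, ?_⟩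
    obtain ⟨t, ht⟩ := h2n
    obtain ⟨s, hs⟩ := h2k
    -- 2*((k-1)*(k-2)) divides P and M, hence β
    have hDP : 2 * ((k - 1) * (k - 2)) ∣ n * (n - 1) * (n - 2) :=
      ⟨t * m, by rw [hP, ht]; ring⟩
    have hDM : 2 * ((k - 1) * (k - 2)) ∣ k * (k - 1) * (k - 2) :=
      ⟨s, by rw [hs]; ring⟩
    have hDb : 2 * ((k - 1) * (k - 2)) ∣ (n * (n - 1) * (n - 2)) % (k * (k - 1) * (k - 2)) :=
      (Nat.dvd_mod_iff hDM).mpr hDP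
    obtain ⟨c, hc⟩ := hDb
    rw [hq] at hc
    have : q = 2 * c := Nat.eq_of_mul_eq_mul_left hpos (by rw [hc]; ring)
    rw [hqeq, this]
    exact ⟨c, rfl⟩
end

section
/- Let k ≥ 4 and suppose (n−2) ≡ 0 (mod k−2) and (n−1)(n−2) ≡ p(k−2) (mod (k−1)(k−2)) with 1 ≤ p ≤ k−2. Define β ∈ [0, k(k−1)(k−2)) by β ≡ n(n−1)(n−2) − n(p+k−1)(k−2) (mod k(k−1)(k−2)). Then β is divisible by (k−1)(k−2), and J'(n,k,3) := ⌊(n/k)·(⌊(n−1)(n−2)/((k−1)(k−2))⌋ − 1)⌋ equals (n(n−1)(n−2) − n(p+k−1)(k−2) − β)/(k(k−1)(k−2)). -/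
theorem stmt19 (n k p : ℕ) (hk : 4 ≤ k) (hkn : k < n)
    (hp1 : 1 ≤ p) (hp2 : p ≤ k - 2)
    (h1 : (k - 2) ∣ (n - 2))
    (h2 : (n - 1) * (n - 2) ≡ p * (k - 2) [MOD (k - 1) * (k - 2)]) :
    ((k : ℤ) - 1) * ((k : ℤ) - 2) ∣
      (((n : ℤ) * ((n : ℤ) - 1) * ((n : ℤ) - 2)
          - (n : ℤ) * ((p : ℤ) + (k : ℤ) - 1) * ((k : ℤ) - 2))
        % ((k : ℤ) * ((k : ℤ) - 1) * ((k : ℤ) - 2))) ∧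
    ((n * ((n - 1) * (n - 2) / ((k - 1) * (k - 2)) - 1) / k : ℕ) : ℤ)
        * ((k : ℤ) * ((k : ℤ) - 1) * ((k : ℤ) - 2)) =
      (n : ℤ) * ((n : ℤ) - 1) * ((n : ℤ) - 2)
        - (n : ℤ) * ((p : ℤ) + (k : ℤ) - 1) * ((k : ℤ) - 2)
        - (((n : ℤ) * ((n : ℤ) - 1) * ((n : ℤ) - 2)
            - (n : ℤ) * ((p : ℤ) + (k : ℤ) - 1) * ((k : ℤ) - 2))
          % ((k : ℤ) * ((k : ℤ) - 1) * ((k : ℤ) - 2))) := by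
  have hn5 : 5 ≤ n := by omega
  -- the remainder is exactly p*(k-2)
  have hpk : p * (k - 2) < (k - 1) * (k - 2) :=
    (Nat.mul_lt_mul_right (show 0 < k - 2 by omega)).mpr (show p < k - 1 by omega)
  have hmod : (n - 1) * (n - 2) % ((k - 1) * (k - 2)) = p * (k - 2) := by
    rw [Nat.ModEq] at h2
    rw [h2, Nat.mod_eq_of_lt hpk]
  set q := (n - 1) * (n - 2) / ((k - 1) * (k - 2)) with hqdef
  have hq : (n - 1) * (n - 2) = q * ((k - 1) * (k - 2)) + p * (k - 2) := by
    rw [← hmod, hqdef]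
    exact (Nat.div_add_mod' _ _).symm
  have hq1 : 1 ≤ q := by
    rcases Nat.eq_zero_or_pos q with h0 | h0
    · exfalso
      have ha : k ≤ n - 1 := by omega
      have hb : k - 1 ≤ n - 2 := by omega
      have h3 : k * (k - 1) ≤ (n - 1) * (n - 2) := Nat.mul_le_mul ha hb
      have h4 : p * (k - 2) ≤ (k - 2) * (k - 2) := Nat.mul_le_mul hp2 le_rfl
      have h5 : (k - 2) * (k - 2) < k * (k - 1) :=
        Nat.mul_lt_mul_of_lt_of_le (by omega) (by omega) (by omega)
      rw [h0, Nat.zero_mul, Nat.zero_add] at hq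
      omega
    · exact h0
  set m := n * (q - 1) with hmdef
  have hmk : k * (m / k) + m % k = m := Nat.div_add_mod m k
  -- integer versions
  have c1 : ((n:ℤ) - 1) * ((n:ℤ) - 2)
      = (q:ℤ) * (((k:ℤ) - 1) * ((k:ℤ) - 2)) + (p:ℤ) * ((k:ℤ) - 2) := by
    zify [show 1 ≤ n by omega, show 2 ≤ n by omega, show 1 ≤ k by omega,
      show 2 ≤ k by omega] at hq
    linarith [hq]
  have c2 : (m:ℤ) = (n:ℤ) * ((q:ℤ) - 1) := by
    rw [hmdef]
    push_cast [Nat.cast_sub hq1]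
    ring
  have hN : (n : ℤ) * ((n : ℤ) - 1) * ((n : ℤ) - 2)
        - (n : ℤ) * ((p : ℤ) + (k : ℤ) - 1) * ((k : ℤ) - 2)
      = (m:ℤ) * (((k:ℤ) - 1) * ((k:ℤ) - 2)) := by
    linear_combination (n:ℤ) * c1 - (((k:ℤ) - 1) * ((k:ℤ) - 2)) * c2
  have hDpos : (0:ℤ) < ((k:ℤ) - 1) * ((k:ℤ) - 2) := by
    have : (4:ℤ) ≤ (k:ℤ) := by exact_mod_cast hk
    nlinarith
  have hNm : ((n : ℤ) * ((n : ℤ) - 1) * ((n : ℤ) - 2)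
        - (n : ℤ) * ((p : ℤ) + (k : ℤ) - 1) * ((k : ℤ) - 2))
        % ((k : ℤ) * ((k : ℤ) - 1) * ((k : ℤ) - 2))
      = ((m % k : ℕ) : ℤ) * (((k:ℤ) - 1) * ((k:ℤ) - 2)) := by
    rw [hN]
    have : (k : ℤ) * ((k : ℤ) - 1) * ((k : ℤ) - 2)
        = (((k:ℤ) - 1) * ((k:ℤ) - 2)) * (k:ℤ) := by ring
    rw [this, mul_comm (m:ℤ), Int.mul_emod_mul_of_pos _ _ hDpos]
    push_cast
    ring
  constructor
  · rw [hNm]; exact dvd_mul_left _ _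
  · rw [hNm, hN]
    have c3 : (k:ℤ) * ((m / k : ℕ):ℤ) + ((m % k : ℕ):ℤ) = (m:ℤ) := by
      exact_mod_cast hmk
    linear_combination (((k:ℤ) - 1) * ((k:ℤ) - 2)) * c3
end
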